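/- If G is a connected twin-free graph on n vertices with imax(G) = k where k ≥ 2, then n ≤ 2^{k-1} + k - 2. -/

import Mathlib

open SimpleGraph

/-- `s` is an independent set in `G`. -/
def IsIndep {V : Type*} (G : SimpleGraph V) (s : Set V) : Prop :=
  ∀ ⦃u⦄, u ∈ s → ∀ ⦃v⦄, v ∈ s → ¬ G.Adj u v

/-- `s` is a maximal independent set in `G`. -/
def IsMaxIndep {V : Type*} (G : SimpleGraph V) (s : Set V) : Prop :=
  IsIndep G s ∧ ∀ t : Set V, IsIndep G t → s ⊆ t → s = t

/-- The number of maximal independent sets of `G`. -/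
noncomputable def imax {V : Type*} (G : SimpleGraph V) : ℕ :=
  Set.ncard {s : Set V | IsMaxIndep G s}

/-- `G` is twin-free: no two distinct vertices have the same open neighbourhood. -/
def TwinFree {V : Type*} (G : SimpleGraph V) : Prop :=
  ∀ u v : V, G.neighborSet u = G.neighborSet v → u = v

section Combinatorics

variable {β : Type*} [DecidableEq β]

private lemma sdd {s F : Finset β} (h : s ⊆ F) : F \ (F \ s) = s := by
  ext a
  simp only [Finset.mem_sdiff, not_and, not_not]
  constructor
  · rintro ⟨h1, h2⟩; exact h2 h1
  · intro ha; exact ⟨h ha, fun _ => ha⟩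

private lemma filter_symmDiff_eq (T₁ T₂ : Finset β) (P : β → Prop) [DecidablePred P] :
    (symmDiff T₁ T₂).filter P = symmDiff (T₁.filter P) (T₂.filter P) := by
  ext x
  simp only [Finset.mem_filter, Finset.mem_symmDiff]
  tauto

private lemma card_symmDiff_parity (A B : Finset β) :
    (symmDiff A B).card % 2 = (A.card + B.card) % 2 := by
  have h1 : symmDiff A B = (A \ B) ∪ (B \ A) := by
    rw [symmDiff_def]; rfl
  have hd : Disjoint (A \ B) (B \ A) := disjoint_sdiff_sdiff
  have h2 := Finset.card_sdiff_add_card_inter A B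
  have h3 := Finset.card_sdiff_add_card_inter B A
  have h4 : (A ∩ B).card = (B ∩ A).card := by rw [Finset.inter_comm]
  rw [h1, Finset.card_union_of_disjoint hd]
  omega

/-- The core parity/Helly contradiction: an "even cut dependency" violates the
Helly property. -/
private lemma core_even (F : Finset β) (S : Finset (Finset β))
    (helly : ∀ 𝒢 : Finset (Finset β), (∀ X ∈ 𝒢, X ∈ S) →
      (∀ X ∈ 𝒢, ∀ Y ∈ 𝒢, (X ∩ Y).Nonempty) → ∃ c ∈ F, ∀ X ∈ 𝒢, c ∈ X)
    (a₀ : β) (ha₀ : a₀ ∈ F)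
    (T : Finset (Finset β)) (hTne : T.Nonempty)
    (hsub : ∀ X ∈ T, X ⊆ F) (hne : ∀ X ∈ T, X.Nonempty) (hpr : ∀ X ∈ T, X ≠ F)
    (hS : ∀ X ∈ T, X ∈ S) (hS' : ∀ X ∈ T, F \ X ∈ S)
    (hcut : ∀ X ∈ T, ∀ Y ∈ T, X ≠ Y → X ≠ F \ Y)
    (heven : ∀ a ∈ F, Even ((T.filter (fun X => a ∈ X)).card)) : False := by
  classical
  set O : Finset β → Finset β := fun X => if a₀ ∈ X then F \ X else X with hO
  set H : Finset β → Finset β := fun X => if a₀ ∈ X then X else F \ X with hH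
  have hOS : ∀ X ∈ T, O X ∈ S := by
    intro X hX
    by_cases h : a₀ ∈ X
    · simpa [hO, h] using hS' X hX
    · simpa [hO, h] using hS X hX
  have hHS : ∀ X ∈ T, H X ∈ S := by
    intro X hX
    by_cases h : a₀ ∈ X
    · simpa [hH, h] using hS X hX
    · simpa [hH, h] using hS' X hX
  have hHa₀ : ∀ X ∈ T, a₀ ∈ H X := by
    intro X hX
    by_cases h : a₀ ∈ X
    · simp [hH, h]
    · simp [hH, h, Finset.mem_sdiff, ha₀]
  have hONe : ∀ X ∈ T, (O X).Nonempty := by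
    intro X hX
    by_cases h : a₀ ∈ X
    · simpa [hO, h] using
        Finset.sdiff_nonempty.2 (fun hFX => hpr X hX (Finset.Subset.antisymm (hsub X hX) hFX))
    · simpa [hO, h] using hne X hX
  have hOF : ∀ X ∈ T, O X ⊆ F := by
    intro X hX
    by_cases h : a₀ ∈ X
    · simp [hO, h]
    · simpa [hO, h] using hsub X hX
  have hHO : ∀ X ∈ T, ∀ a ∈ F, a ∉ H X → a ∈ O X := by
    intro X hX a haF ha
    by_cases h : a₀ ∈ X
    · simp only [hH, h, if_true] at ha
      simp only [hO, h, if_true]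
      exact Finset.mem_sdiff.2 ⟨haF, ha⟩
    · simp only [hH, h, if_false] at ha
      simp only [hO, h, if_false]
      by_contra hax
      exact ha (Finset.mem_sdiff.2 ⟨haF, hax⟩)
  -- main dichotomy step
  have step : ∀ i ∈ T, ∃ j ∈ T, j ≠ i ∧ O i ⊆ O j := by
    intro i hi
    set 𝒢 : Finset (Finset β) := insert (O i) ((T.erase i).image H) with h𝒢
    have h𝒢S : ∀ X ∈ 𝒢, X ∈ S := by
      intro X hX
      rcases Finset.mem_insert.1 hX with h | h
      · rw [h]; exact hOS i hi
      · obtain ⟨Y, hY, rfl⟩ := Finset.mem_image.1 h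
        exact hHS Y (Finset.mem_of_mem_erase hY)
    have hnopair : ¬ (∀ X ∈ 𝒢, ∀ Y ∈ 𝒢, (X ∩ Y).Nonempty) := by
      intro hpair
      obtain ⟨c, hcF, hc⟩ := helly 𝒢 h𝒢S hpair
      have hcO : c ∈ O i := hc _ (Finset.mem_insert_self _ _)
      have hcH : ∀ Y ∈ T.erase i, c ∈ H Y := fun Y hY =>
        hc _ (Finset.mem_insert_of_mem (Finset.mem_image_of_mem H hY))
      have hfeq : (T.erase i).filter (fun X => c ∈ X) = (T.erase i).filter (fun X => a₀ ∈ X) := by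
        apply Finset.filter_congr
        intro Y hY
        have h1 := hcH Y hY
        by_cases h : a₀ ∈ Y <;> simp only [hH, h, if_true, if_false] at h1
        · simp [h1, h]
        · simp [(Finset.mem_sdiff.1 h1).2, h]
      have hins : T = insert i (T.erase i) := (Finset.insert_erase hi).symm
      have hniT : i ∉ T.erase i := Finset.notMem_erase i T
      have hEc := heven c hcF
      have hEa := heven a₀ ha₀
      rw [hins, Finset.filter_insert] at hEc hEa
      by_cases h : a₀ ∈ i
      · have hcni : c ∉ i := by
          have := hcO
          simp only [hO, h, if_true] at this
          exact (Finset.mem_sdiff.1 this).2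
        rw [if_neg hcni, hfeq] at hEc
        rw [if_pos h, Finset.card_insert_of_notMem
          (fun hmem => hniT (Finset.mem_of_mem_filter _ hmem))] at hEa
        rw [Nat.even_iff] at hEc hEa
        omega
      · have hci : c ∈ i := by
          have := hcO
          simp only [hO, h, if_false] at this
          exact this
        rw [if_pos hci, hfeq, Finset.card_insert_of_notMem
          (fun hmem => hniT (Finset.mem_of_mem_filter _ hmem))] at hEc
        rw [if_neg h] at hEa
        rw [Nat.even_iff] at hEc hEa
        omega
    have hdisj : ∃ X ∈ 𝒢, ∃ Y ∈ 𝒢, ¬ (X ∩ Y).Nonempty := by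
      by_contra hcon
      push_neg at hcon
      exact hnopair hcon
    obtain ⟨X, hX, Y, hY, hXY⟩ := hdisj
    have hXYe : X ∩ Y = ∅ := Finset.not_nonempty_iff_eq_empty.1 hXY
    have key : ∀ Z ∈ 𝒢, Z = O i ∨ ∃ j ∈ T.erase i, Z = H j := by
      intro Z hZ
      rcases Finset.mem_insert.1 hZ with h | h
      · exact Or.inl h
      · obtain ⟨j, hj, rfl⟩ := Finset.mem_image.1 h
        exact Or.inr ⟨j, hj, rfl⟩
    have main : ∀ j ∈ T.erase i, O i ∩ H j = ∅ → ∃ j' ∈ T, j' ≠ i ∧ O i ⊆ O j' := by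
      intro j hj hOiHj
      refine ⟨j, Finset.mem_of_mem_erase hj, Finset.ne_of_mem_erase hj, ?_⟩
      intro a ha
      have haF : a ∈ F := hOF i hi ha
      have hnaH : a ∉ H j := by
        intro hmem
        have : a ∈ O i ∩ H j := Finset.mem_inter.2 ⟨ha, hmem⟩
        rw [hOiHj] at this
        exact absurd this (Finset.notMem_empty a)
      exact hHO j (Finset.mem_of_mem_erase hj) a haF hnaH
    rcases key X hX with h1 | ⟨j1, hj1, h1⟩ <;> rcases key Y hY with h2 | ⟨j2, hj2, h2⟩
    · exfalso
      rw [h1, h2, Finset.inter_self] at hXYe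
      obtain ⟨a, ha⟩ := hONe i hi
      rw [hXYe] at ha
      exact absurd ha (Finset.notMem_empty a)
    · exact main j2 hj2 (by rw [← h1, ← h2]; exact hXYe)
    · exact main j1 hj1 (by rw [← h1, ← h2, Finset.inter_comm]; exact hXYe)
    · exfalso
      have : a₀ ∈ X ∩ Y := Finset.mem_inter.2
        ⟨h1 ▸ hHa₀ j1 (Finset.mem_of_mem_erase hj1), h2 ▸ hHa₀ j2 (Finset.mem_of_mem_erase hj2)⟩
      rw [hXYe] at this
      exact absurd this (Finset.notMem_empty a₀)
  -- take a maximal O and derive a contradiction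
  obtain ⟨i, hi, hmax⟩ := T.exists_max_image (fun X => (O X).card) hTne
  obtain ⟨j, hj, hji, hsubO⟩ := step i hi
  have heqO : O i = O j := Finset.eq_of_subset_of_card_le hsubO (hmax j hj)
  by_cases h1 : a₀ ∈ i <;> by_cases h2 : a₀ ∈ j <;>
    simp only [hO, h1, h2, if_true, if_false] at heqO
  · have : i = j := by
      have h3 : F \ (F \ i) = F \ (F \ j) := by rw [heqO]
      rwa [sdd (hsub i hi), sdd (hsub j hj)] at h3
    exact hji this.symm
  · exact hcut j hj i hi hji heqO.symm
  · exact hcut i hi j hj (fun h => hji h.symm) heqO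
  · exact hji heqO.symm

/-- The odd variant, by flipping one cut. -/
private lemma core_odd (F : Finset β) (S : Finset (Finset β))
    (helly : ∀ 𝒢 : Finset (Finset β), (∀ X ∈ 𝒢, X ∈ S) →
      (∀ X ∈ 𝒢, ∀ Y ∈ 𝒢, (X ∩ Y).Nonempty) → ∃ c ∈ F, ∀ X ∈ 𝒢, c ∈ X)
    (a₀ : β) (ha₀ : a₀ ∈ F)
    (T : Finset (Finset β))
    (hsub : ∀ X ∈ T, X ⊆ F) (hne : ∀ X ∈ T, X.Nonempty) (hpr : ∀ X ∈ T, X ≠ F)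
    (hS : ∀ X ∈ T, X ∈ S) (hS' : ∀ X ∈ T, F \ X ∈ S)
    (hcut : ∀ X ∈ T, ∀ Y ∈ T, X ≠ Y → X ≠ F \ Y)
    (hodd : ∀ a ∈ F, Odd ((T.filter (fun X => a ∈ X)).card)) : False := by
  classical
  have hTne : T.Nonempty := by
    rcases T.eq_empty_or_nonempty with rfl | h
    · have := hodd a₀ ha₀
      simp at this
    · exact h
  obtain ⟨X₀, hX₀⟩ := hTne
  have hX₀sub := hsub X₀ hX₀
  have hcne : F \ X₀ ≠ X₀ := by
    obtain ⟨a, ha⟩ := hne X₀ hX₀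
    intro h
    have : a ∈ F \ X₀ := h.symm ▸ ha
    exact (Finset.mem_sdiff.1 this).2 ha
  have hnotmem : F \ X₀ ∉ T := fun hmem => hcut (F \ X₀) hmem X₀ hX₀ hcne rfl
  have hX₀e : X₀ ∉ T.erase X₀ := Finset.notMem_erase _ _
  have hFX₀e : F \ X₀ ∉ T.erase X₀ := fun h => hnotmem (Finset.mem_of_mem_erase h)
  have hFX₀ne : (F \ X₀).Nonempty :=
    Finset.sdiff_nonempty.2 (fun hFX => hpr X₀ hX₀ (Finset.Subset.antisymm hX₀sub hFX))
  have hFX₀pr : F \ X₀ ≠ F := by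
    intro h
    obtain ⟨a, ha⟩ := hne X₀ hX₀
    have : a ∈ F \ X₀ := h.symm ▸ (hX₀sub ha)
    exact (Finset.mem_sdiff.1 this).2 ha
  have hddX₀ : F \ (F \ X₀) = X₀ := sdd hX₀sub
  set T' : Finset (Finset β) := insert (F \ X₀) (T.erase X₀) with hT'
  have hmemT' : ∀ X ∈ T', X = F \ X₀ ∨ X ∈ T.erase X₀ := fun X hX => Finset.mem_insert.1 hX
  apply core_even F S helly a₀ ha₀ T' ⟨_, Finset.mem_insert_self _ _⟩
  · intro X hX
    rcases hmemT' X hX with rfl | h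
    · exact Finset.sdiff_subset
    · exact hsub X (Finset.mem_of_mem_erase h)
  · intro X hX
    rcases hmemT' X hX with rfl | h
    · exact hFX₀ne
    · exact hne X (Finset.mem_of_mem_erase h)
  · intro X hX
    rcases hmemT' X hX with rfl | h
    · exact hFX₀pr
    · exact hpr X (Finset.mem_of_mem_erase h)
  · intro X hX
    rcases hmemT' X hX with rfl | h
    · exact hS' X₀ hX₀
    · exact hS X (Finset.mem_of_mem_erase h)
  · intro X hX
    rcases hmemT' X hX with rfl | h
    · rw [hddX₀]; exact hS X₀ hX₀
    · exact hS' X (Finset.mem_of_mem_erase h)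
  · intro X hX Y hY hXY
    rcases hmemT' X hX with rfl | hXe <;> rcases hmemT' Y hY with rfl | hYe
    · exact absurd rfl hXY
    · intro h
      have h3 : X₀ = Y := by
        have := congrArg (fun Z => F \ Z) h
        simpa [hddX₀, sdd (hsub Y (Finset.mem_of_mem_erase hYe))] using this
      exact (Finset.ne_of_mem_erase hYe) h3.symm
    · rw [hddX₀]
      exact Finset.ne_of_mem_erase hXe
    · exact hcut X (Finset.mem_of_mem_erase hXe) Y (Finset.mem_of_mem_erase hYe) hXY
  · intro a haF
    have hinsT : T = insert X₀ (T.erase X₀) := (Finset.insert_erase hX₀).symm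
    have hoddT := hodd a haF
    rw [hinsT, Finset.filter_insert] at hoddT
    rw [hT', Finset.filter_insert]
    have hmemsd : a ∈ F \ X₀ ↔ a ∉ X₀ := by
      simp [Finset.mem_sdiff, haF]
    by_cases hax : a ∈ X₀
    · rw [if_pos hax, Finset.card_insert_of_notMem
        (fun hmem => hX₀e (Finset.mem_of_mem_filter _ hmem))] at hoddT
      rw [if_neg (fun hmem => (hmemsd.1 hmem) hax)]
      rw [Nat.odd_iff] at hoddT
      rw [Nat.even_iff]
      omega
    · rw [if_neg hax] at hoddT
      rw [if_pos (hmemsd.2 hax), Finset.card_insert_of_notMem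
        (fun hmem => hFX₀e (Finset.mem_of_mem_filter _ hmem))]
      rw [Nat.odd_iff] at hoddT
      rw [Nat.even_iff]
      omega

/-- Choose representatives of complement pairs. -/
private lemma exists_reps (F : Finset β) :
    ∀ D : Finset (Finset β), (∀ X ∈ D, X ⊆ F) → (∀ X ∈ D, X.Nonempty) →
      (∀ X ∈ D, F \ X ∈ D) →
      ∃ R : Finset (Finset β), R ⊆ D ∧ D.card = 2 * R.card ∧ ∀ X ∈ R, F \ X ∉ R := by
  intro D
  induction D using Finset.strongInduction with
  | _ D ih =>
    intro hsub hne hcl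
    rcases D.eq_empty_or_nonempty with rfl | ⟨X, hX⟩
    · exact ⟨∅, by simp⟩
    · have hXF := hsub X hX
      have hcne : F \ X ≠ X := by
        obtain ⟨a, ha⟩ := hne X hX
        intro h
        have : a ∈ F \ X := h.symm ▸ ha
        exact (Finset.mem_sdiff.1 this).2 ha
      have hFX : F \ X ∈ D := hcl X hX
      have hFXe : F \ X ∈ D.erase X := Finset.mem_erase.2 ⟨hcne, hFX⟩
      set D' := (D.erase X).erase (F \ X) with hD'
      have hD'sub : D' ⊆ D := fun Y hY =>
        Finset.mem_of_mem_erase (Finset.mem_of_mem_erase hY)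
      have hXD' : X ∉ D' := fun h => (Finset.notMem_erase X D) (Finset.mem_of_mem_erase h)
      have hFXD' : F \ X ∉ D' := Finset.notMem_erase _ _
      have hss : D' ⊂ D := Finset.ssubset_iff_of_subset hD'sub |>.2 ⟨X, hX, hXD'⟩
      have hcl' : ∀ Y ∈ D', F \ Y ∈ D' := by
        intro Y hY
        have hYD := hD'sub hY
        have h1 : F \ Y ∈ D := hcl Y hYD
        have h2 : F \ Y ≠ X := by
          intro h
          have : Y = F \ X := by
            rw [← sdd (hsub Y hYD), h]
          exact hFXD' (this ▸ hY)
        have h3 : F \ Y ≠ F \ X := by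
          intro h
          have : Y = X := by
            have := congrArg (F \ ·) h
            simpa [sdd (hsub Y hYD), sdd hXF] using this
          exact hXD' (this ▸ hY)
        exact Finset.mem_erase.2 ⟨h3, Finset.mem_erase.2 ⟨h2, h1⟩⟩
      obtain ⟨R', hR'sub, hcard, hgood⟩ := ih D' hss
        (fun Y hY => hsub Y (hD'sub hY)) (fun Y hY => hne Y (hD'sub hY)) hcl'
      have hXR' : X ∉ R' := fun h => hXD' (hR'sub h)
      have hFXR' : F \ X ∉ R' := fun h => hFXD' (hR'sub h)
      refine ⟨insert X R', ?_, ?_, ?_⟩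
      · intro Y hY
        rcases Finset.mem_insert.1 hY with rfl | h
        · exact hX
        · exact hD'sub (hR'sub h)
      · have hc1 : (D.erase X).card = D.card - 1 := Finset.card_erase_of_mem hX
        have hc2 : D'.card = (D.erase X).card - 1 := Finset.card_erase_of_mem hFXe
        have hc3 : (insert X R').card = R'.card + 1 := Finset.card_insert_of_notMem hXR'
        have hDpos : 1 ≤ D.card := Finset.card_pos.2 ⟨X, hX⟩
        have hE1 : 1 ≤ (D.erase X).card := Finset.card_pos.2 ⟨F \ X, hFXe⟩
        omega
      · intro Y hY
        rcases Finset.mem_insert.1 hY with rfl | h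
        · intro hmem
          rcases Finset.mem_insert.1 hmem with h' | h'
          · exact hcne h'
          · exact hFXR' h'
        · intro hmem
          rcases Finset.mem_insert.1 hmem with h' | h'
          · apply hFXD' 
            have : Y = F \ X := by
              rw [← sdd (hsub Y (hD'sub (hR'sub h))), h']
            exact this ▸ (hR'sub h)
          · exact hgood Y h h'

/-- The key combinatorial bound: a Helly family of nonempty proper subsets of a
`k`-element set has at most `2^(k-1) + k - 2` members. -/
private lemma key_bound (k : ℕ) (hk : 2 ≤ k) (F : Finset β) (hF : F.card = k)
    (S : Finset (Finset β))
    (h1 : ∀ X ∈ S, X ⊆ F) (h2 : ∀ X ∈ S, X.Nonempty) (h3 : ∀ X ∈ S, X ≠ F)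
    (helly : ∀ 𝒢 : Finset (Finset β), (∀ X ∈ 𝒢, X ∈ S) →
      (∀ X ∈ 𝒢, ∀ Y ∈ 𝒢, (X ∩ Y).Nonempty) → ∃ c ∈ F, ∀ X ∈ 𝒢, c ∈ X) :
    S.card ≤ 2 ^ (k - 1) + k - 2 := by
  classical
  have hFne : F.Nonempty := Finset.card_pos.1 (by omega)
  obtain ⟨a₀, ha₀⟩ := hFne
  set S' := S.image (fun X => F \ X) with hS'def
  set D := S ∩ S' with hDdef
  have hDS : ∀ X ∈ D, X ∈ S := fun X hX => (Finset.mem_inter.1 hX).1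
  have hDc : ∀ X ∈ D, F \ X ∈ S := by
    intro X hX
    obtain ⟨Y, hY, hYX⟩ := Finset.mem_image.1 (Finset.mem_inter.1 hX).2
    rw [← hYX, sdd (h1 Y hY)]
    exact hY
  have hDcl : ∀ X ∈ D, F \ X ∈ D := by
    intro X hX
    refine Finset.mem_inter.2 ⟨hDc X hX, ?_⟩
    exact Finset.mem_image.2 ⟨X, hDS X hX, rfl⟩
  obtain ⟨R, hRD, hDcard, hRgood⟩ := exists_reps F D
    (fun X hX => h1 X (hDS X hX)) (fun X hX => h2 X (hDS X hX)) hDcl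
  -- facts for subsets of R
  have hRfacts : ∀ T : Finset (Finset β), T ⊆ R →
      (∀ X ∈ T, X ⊆ F) ∧ (∀ X ∈ T, X.Nonempty) ∧ (∀ X ∈ T, X ≠ F) ∧
      (∀ X ∈ T, X ∈ S) ∧ (∀ X ∈ T, F \ X ∈ S) ∧
      (∀ X ∈ T, ∀ Y ∈ T, X ≠ Y → X ≠ F \ Y) := by
    intro T hT
    have hTD : ∀ X ∈ T, X ∈ D := fun X hX => hRD (hT hX)
    refine ⟨fun X hX => h1 X (hDS X (hTD X hX)),
      fun X hX => h2 X (hDS X (hTD X hX)),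
      fun X hX => h3 X (hDS X (hTD X hX)),
      fun X hX => hDS X (hTD X hX),
      fun X hX => hDc X (hTD X hX), ?_⟩
    intro X hX Y hY _ hXFY
    exact hRgood Y (hT hY) (hXFY ▸ hT hX)
  have noEven : ∀ T : Finset (Finset β), T ⊆ R → T.Nonempty →
      ¬ (∀ a ∈ F, Even ((T.filter (fun X => a ∈ X)).card)) := by
    intro T hT hTne hEv
    obtain ⟨f1, f2, f3, f4, f5, f6⟩ := hRfacts T hT
    exact core_even F S helly a₀ ha₀ T hTne f1 f2 f3 f4 f5 f6 hEv
  have noOdd : ∀ T : Finset (Finset β), T ⊆ R →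
      ¬ (∀ a ∈ F, Odd ((T.filter (fun X => a ∈ X)).card)) := by
    intro T hT hOd
    obtain ⟨f1, f2, f3, f4, f5, f6⟩ := hRfacts T hT
    exact core_odd F S helly a₀ ha₀ T f1 f2 f3 f4 f5 f6 hOd
  -- the powerset injections
  set g : Finset (Finset β) → Finset β :=
    fun Tt => F.filter (fun a => Odd ((Tt.filter (fun X => a ∈ X)).card)) with hgdef
  have hgsub : ∀ Tt, g Tt ⊆ F := fun _ => Finset.filter_subset _ _
  have hparity : ∀ (T₁ T₂ : Finset (Finset β)) (a : β),
      ((symmDiff T₁ T₂).filter (fun X => a ∈ X)).card % 2 =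
        ((T₁.filter (fun X => a ∈ X)).card + (T₂.filter (fun X => a ∈ X)).card) % 2 := by
    intro T₁ T₂ a
    rw [filter_symmDiff_eq]
    exact card_symmDiff_parity _ _
  have hsdR : ∀ (T₁ T₂ : Finset (Finset β)), T₁ ⊆ R → T₂ ⊆ R → symmDiff T₁ T₂ ⊆ R := by
    intro T₁ T₂ h₁ h₂ X hX
    rcases Finset.mem_symmDiff.1 hX with ⟨h, _⟩ | ⟨h, _⟩
    · exact h₁ h
    · exact h₂ h
  have hginj : ∀ T₁, T₁ ⊆ R → ∀ T₂, T₂ ⊆ R → g T₁ = g T₂ → T₁ = T₂ := by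
    intro T₁ h₁ T₂ h₂ heq
    by_contra hne'
    have hW : (symmDiff T₁ T₂).Nonempty := by
      rw [Finset.nonempty_iff_ne_empty]
      intro h0
      apply hne'
      rw [← symmDiff_eq_bot, Finset.bot_eq_empty]
      exact h0
    apply noEven (symmDiff T₁ T₂) (hsdR T₁ T₂ h₁ h₂) hW
    intro a haF
    have hmem : (a ∈ g T₁) ↔ (a ∈ g T₂) := by rw [heq]
    simp only [hgdef, Finset.mem_filter, haF, true_and] at hmem
    rw [Nat.odd_iff, Nat.odd_iff] at hmem
    have hp := hparity T₁ T₂ a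
    rw [Nat.even_iff]
    rcases Nat.mod_two_eq_zero_or_one ((T₁.filter (fun X => a ∈ X)).card) with h | h <;>
      rcases Nat.mod_two_eq_zero_or_one ((T₂.filter (fun X => a ∈ X)).card) with h' | h'
    · omega
    · rw [h, h'] at hmem; simp at hmem
    · rw [h, h'] at hmem; simp at hmem
    · omega
  have hgdisj : ∀ T₁, T₁ ⊆ R → ∀ T₂, T₂ ⊆ R → g T₁ ≠ F \ g T₂ := by
    intro T₁ h₁ T₂ h₂ heq
    apply noOdd (symmDiff T₁ T₂) (hsdR T₁ T₂ h₁ h₂)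
    intro a haF
    have hmem : (a ∈ g T₁) ↔ (a ∈ F \ g T₂) := by rw [heq]
    rw [Finset.mem_sdiff] at hmem
    simp only [hgdef, Finset.mem_filter, haF, true_and, not_and] at hmem
    rw [Nat.odd_iff, Nat.odd_iff] at hmem
    have hp := hparity T₁ T₂ a
    rw [Nat.odd_iff]
    rcases Nat.mod_two_eq_zero_or_one ((T₁.filter (fun X => a ∈ X)).card) with h | h <;>
      rcases Nat.mod_two_eq_zero_or_one ((T₂.filter (fun X => a ∈ X)).card) with h' | h'
    · rw [h, h'] at hmem
      simp at hmem
    · omega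
    · omega
    · rw [h, h'] at hmem
      simp at hmem
  set A := R.powerset.image g with hA
  set B := R.powerset.image (fun Tt => F \ g Tt) with hB
  have hAcard : A.card = 2 ^ R.card := by
    rw [hA, Finset.card_image_of_injOn, Finset.card_powerset]
    intro T₁ h₁ T₂ h₂ h
    exact hginj T₁ (Finset.mem_powerset.1 h₁) T₂ (Finset.mem_powerset.1 h₂) h
  have hBcard : B.card = 2 ^ R.card := by
    rw [hB, Finset.card_image_of_injOn, Finset.card_powerset]
    intro T₁ h₁ T₂ h₂ h
    apply hginj T₁ (Finset.mem_powerset.1 h₁) T₂ (Finset.mem_powerset.1 h₂)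
    have h' : F \ g T₁ = F \ g T₂ := h
    have h3 : F \ (F \ g T₁) = F \ (F \ g T₂) := by rw [h']
    rwa [sdd (hgsub T₁), sdd (hgsub T₂)] at h3
  have hABdisj : Disjoint A B := by
    rw [Finset.disjoint_left]
    intro x hxA hxB
    obtain ⟨T₁, hT₁, rfl⟩ := Finset.mem_image.1 hxA
    obtain ⟨T₂, hT₂, hx⟩ := Finset.mem_image.1 hxB
    exact hgdisj T₁ (Finset.mem_powerset.1 hT₁) T₂ (Finset.mem_powerset.1 hT₂) hx.symm
  have hABsub : A ∪ B ⊆ F.powerset := by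
    intro x hx
    rcases Finset.mem_union.1 hx with h | h
    · obtain ⟨T₁, _, rfl⟩ := Finset.mem_image.1 h
      exact Finset.mem_powerset.2 (hgsub T₁)
    · obtain ⟨T₁, _, rfl⟩ := Finset.mem_image.1 h
      exact Finset.mem_powerset.2 Finset.sdiff_subset
  have hcount : 2 ^ R.card + 2 ^ R.card ≤ 2 ^ k := by
    calc 2 ^ R.card + 2 ^ R.card = A.card + B.card := by rw [hAcard, hBcard]
    _ = (A ∪ B).card := (Finset.card_union_of_disjoint hABdisj).symm
    _ ≤ F.powerset.card := Finset.card_le_card hABsub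
    _ = 2 ^ k := by rw [Finset.card_powerset, hF]
  have hRk : R.card ≤ k - 1 := by
    have hp : 2 ^ (R.card + 1) ≤ 2 ^ k := by
      rw [pow_succ]
      omega
    have := (Nat.pow_le_pow_iff_right (by norm_num : 1 < 2)).1 hp
    omega
  -- final counting
  have hS'card : S'.card = S.card := by
    rw [hS'def]
    apply Finset.card_image_of_injOn
    intro X hX Y hY h
    have h' : F \ X = F \ Y := h
    have h3 : F \ (F \ X) = F \ (F \ Y) := by rw [h']
    rwa [sdd (h1 X hX), sdd (h1 Y hY)] at h3
  have hUD := Finset.card_union_add_card_inter S S'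
  have hUsub : (S ∪ S') ⊆ (F.powerset.erase ∅).erase F := by
    intro X hX
    have hXsub : X ⊆ F ∧ X.Nonempty ∧ X ≠ F := by
      rcases Finset.mem_union.1 hX with h | h
      · exact ⟨h1 X h, h2 X h, h3 X h⟩
      · obtain ⟨Y, hY, rfl⟩ := Finset.mem_image.1 h
        refine ⟨Finset.sdiff_subset, ?_, ?_⟩
        · exact Finset.sdiff_nonempty.2
            (fun hFY => h3 Y hY (Finset.Subset.antisymm (h1 Y hY) hFY))
        · intro h
          obtain ⟨a, ha⟩ := h2 Y hY
          have : a ∈ F \ Y := h.symm ▸ (h1 Y hY ha)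
          exact (Finset.mem_sdiff.1 this).2 ha
    refine Finset.mem_erase.2 ⟨hXsub.2.2, Finset.mem_erase.2 ⟨?_, Finset.mem_powerset.2 hXsub.1⟩⟩
    exact Finset.nonempty_iff_ne_empty.1 hXsub.2.1
  have hUcard : (S ∪ S').card ≤ 2 ^ k - 2 := by
    refine le_trans (Finset.card_le_card hUsub) ?_
    have hm1 : F ∈ F.powerset.erase ∅ := Finset.mem_erase.2
      ⟨Finset.nonempty_iff_ne_empty.1 ⟨a₀, ha₀⟩, Finset.mem_powerset.2 (Finset.Subset.refl F)⟩
    have hm2 : (∅ : Finset β) ∈ F.powerset := Finset.mem_powerset.2 (Finset.empty_subset F)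
    rw [Finset.card_erase_of_mem hm1, Finset.card_erase_of_mem hm2,
      Finset.card_powerset, hF]
    omega
  have hpow : 2 ^ k = 2 * 2 ^ (k - 1) := by
    conv_lhs => rw [show k = (k - 1) + 1 by omega]
    rw [pow_succ]
    ring
  have h2e : 2 ≤ 2 ^ (k - 1) := by
    calc (2:ℕ) = 2 ^ 1 := rfl
    _ ≤ 2 ^ (k - 1) := Nat.pow_le_pow_right (by norm_num) (by omega)
  rw [hpow] at hUcard
  have hDcard' : (S ∩ S').card = 2 * R.card := hDcard
  omega

end Combinatorics

theorem stmt_4 {V : Type*} [Fintype V] (G : SimpleGraph V) (k : ℕ) (hk : 2 ≤ k)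
    (hconn : G.Connected) (htf : TwinFree G) (himax : imax G = k) :
    Fintype.card V ≤ 2 ^ (k - 1) + k - 2 := by
  classical
  set ℱ : Set (Set V) := {s | IsMaxIndep G s} with hℱ
  have hℱfin : ℱ.Finite := Set.toFinite _
  -- every independent set extends to a maximal independent set
  have hext : ∀ s : Set V, IsIndep G s → ∃ t, IsMaxIndep G t ∧ s ⊆ t := by
    intro s hs
    obtain ⟨t, ht, hmax⟩ := Set.Finite.exists_maximalFor (id : Set V → Set V)
      {t : Set V | IsIndep G t ∧ s ⊆ t} (Set.toFinite _) ⟨s, hs, subset_rfl⟩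
    exact ⟨t, ⟨ht.1, fun t' ht' hsub => hsub.antisymm (hmax ⟨ht', ht.2.trans hsub⟩ hsub)⟩, ht.2⟩
  -- every vertex lies in some maximal independent set
  have hvMIS : ∀ v : V, ∃ t, IsMaxIndep G t ∧ v ∈ t := by
    intro v
    obtain ⟨t, ht, hsub⟩ := hext {v} (by
      intro u hu w hw
      rw [Set.mem_singleton_iff] at hu hw
      subst hu; subst hw
      exact G.loopless.irrefl _)
    exact ⟨t, ht, hsub rfl⟩
  -- two distinct vertices exist
  have hVtwo : ∃ u v : V, u ≠ v := by
    have h2M : ∃ s ∈ ℱ, ∃ t ∈ ℱ, s ≠ t := by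
      rw [← Set.one_lt_ncard hℱfin]
      have : ℱ.ncard = k := himax
      omega
    obtain ⟨s, hs, t, ht, hst⟩ := h2M
    have hcases : (¬ s ⊆ t) ∨ (¬ t ⊆ s) := by
      by_contra h
      push_neg at h
      exact hst (Set.Subset.antisymm h.1 h.2)
    have main : ∀ s t : Set V, IsMaxIndep G s → IsMaxIndep G t → ¬ s ⊆ t →
        ∃ u v : V, u ≠ v := by
      intro s t hs ht hnsub
      rw [Set.not_subset] at hnsub
      obtain ⟨v, hvs, hvt⟩ := hnsub
      rcases Set.eq_empty_or_nonempty t with rfl | ⟨w, hw⟩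
      · exfalso
        have hsing : IsIndep G {v} := by
          intro a ha b hb
          rw [Set.mem_singleton_iff] at ha hb
          subst ha; subst hb
          exact G.loopless.irrefl _
        have := ht.2 {v} hsing (Set.empty_subset _)
        exact (Set.singleton_ne_empty v) this.symm
      · exact ⟨v, w, fun h => hvt (h ▸ hw)⟩
    rcases hcases with h | h
    · exact main s t hs ht h
    · exact main t s ht hs h
  -- every vertex has a neighbour
  have hnbr : ∀ v : V, ∃ w, G.Adj v w := by
    intro v
    obtain ⟨a, b, hab⟩ := hVtwo
    have hx : ∃ x, x ≠ v := by
      rcases eq_or_ne a v with rfl | h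
      · exact ⟨b, fun hbv => hab hbv.symm⟩
      · exact ⟨a, h⟩
    obtain ⟨x, hxv⟩ := hx
    obtain ⟨p⟩ := hconn.preconnected v x
    cases p with
    | nil => exact absurd rfl hxv.symm
    | cons h q => exact ⟨_, h⟩
  -- the map M
  set M : V → Set (Set V) := fun v => {s | IsMaxIndep G s ∧ v ∈ s} with hM
  have hMne : ∀ v, (M v).Nonempty := by
    intro v
    obtain ⟨t, ht, hvt⟩ := hvMIS v
    exact ⟨t, ht, hvt⟩
  have hMsub : ∀ v, M v ⊆ ℱ := fun v s hs => hs.1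
  have hMproper : ∀ v, M v ≠ ℱ := by
    intro v heq
    obtain ⟨w, hw⟩ := hnbr v
    obtain ⟨t, ht, hwt⟩ := hvMIS w
    have htℱ : t ∈ ℱ := ht
    have htM : t ∈ M v := heq ▸ htℱ
    exact htM.1.1 htM.2 hwt hw
  have hMinj : Function.Injective M := by
    intro u v huv
    by_contra hne'
    apply hne'
    apply htf
    have hnadj : ¬ G.Adj u v := by
      obtain ⟨t, htM⟩ := hMne v
      have htu : t ∈ M u := huv ▸ htM
      intro hadj
      exact htM.1.1 htu.2 htM.2 hadj
    have hside : ∀ w, G.Adj u w → G.Adj v w := by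
      intro w huw
      by_contra hvw
      have hind : IsIndep G {v, w} := by
        intro a ha b hb
        rcases ha with rfl | ha <;> rcases hb with rfl | hb
        · exact G.loopless.irrefl _
        · rw [Set.mem_singleton_iff] at hb; subst hb; exact hvw
        · rw [Set.mem_singleton_iff] at ha; subst ha
          intro h; exact hvw h.symm
        · rw [Set.mem_singleton_iff] at ha hb; subst ha; subst hb
          exact G.loopless.irrefl _
      obtain ⟨t, ht, hsub⟩ := hext _ hind
      have htv : t ∈ M v := ⟨ht, hsub (by simp)⟩
      have htu : t ∈ M u := huv ▸ htv
      exact ht.1 htu.2 (hsub (by simp)) huw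
    have hside' : ∀ w, G.Adj v w → G.Adj u w := by
      intro w hvw
      by_contra huw
      have hind : IsIndep G {u, w} := by
        intro a ha b hb
        rcases ha with rfl | ha <;> rcases hb with rfl | hb
        · exact G.loopless.irrefl _
        · rw [Set.mem_singleton_iff] at hb; subst hb; exact huw
        · rw [Set.mem_singleton_iff] at ha; subst ha
          intro h; exact huw h.symm
        · rw [Set.mem_singleton_iff] at ha hb; subst ha; subst hb
          exact G.loopless.irrefl _
      obtain ⟨t, ht, hsub⟩ := hext _ hind
      have htu : t ∈ M u := ⟨ht, hsub (by simp)⟩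
      have htv : t ∈ M v := huv ▸ htu
      exact ht.1 htv.2 (hsub (by simp)) hvw
    ext w
    simp only [SimpleGraph.mem_neighborSet]
    exact ⟨hside w, hside' w⟩
  -- Finset encoding
  set F : Finset (Set V) := hℱfin.toFinset with hFdef
  have hFcard : F.card = k := by
    have h1 : ℱ.ncard = F.card := Set.ncard_eq_toFinset_card ℱ hℱfin
    have h2 : ℱ.ncard = k := himax
    omega
  set Mf : V → Finset (Set V) := fun v => (Set.toFinite (M v)).toFinset with hMfdef
  have hMfmem : ∀ v s, s ∈ Mf v ↔ s ∈ M v := by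
    intro v s
    exact Set.Finite.mem_toFinset _
  have hMfinj : Function.Injective Mf := by
    intro u v h
    apply hMinj
    rw [← Set.Finite.coe_toFinset (Set.toFinite (M u)),
      ← Set.Finite.coe_toFinset (Set.toFinite (M v))]
    exact congrArg (fun t : Finset (Set V) => (t : Set (Set V))) h
  set S : Finset (Finset (Set V)) := Finset.univ.image Mf with hSdef
  have hScard : S.card = Fintype.card V := by
    rw [hSdef, Finset.card_image_of_injective _ hMfinj, Finset.card_univ]
  have hmemS : ∀ X ∈ S, ∃ v : V, X = Mf v := by
    intro X hX
    obtain ⟨v, _, rfl⟩ := Finset.mem_image.1 hX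
    exact ⟨v, rfl⟩
  have h1' : ∀ X ∈ S, X ⊆ F := by
    intro X hX
    obtain ⟨v, rfl⟩ := hmemS X hX
    intro s hs
    rw [hFdef, Set.Finite.mem_toFinset]
    exact hMsub v ((hMfmem v s).1 hs)
  have h2' : ∀ X ∈ S, X.Nonempty := by
    intro X hX
    obtain ⟨v, rfl⟩ := hmemS X hX
    obtain ⟨t, ht⟩ := hMne v
    exact ⟨t, (hMfmem v t).2 ht⟩
  have h3' : ∀ X ∈ S, X ≠ F := by
    intro X hX
    obtain ⟨v, rfl⟩ := hmemS X hX
    intro h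
    apply hMproper v
    ext s
    constructor
    · intro hs
      exact hMsub v hs
    · intro hs
      have : s ∈ F := by
        rw [hFdef, Set.Finite.mem_toFinset]
        exact hs
      rw [← h] at this
      exact (hMfmem v s).1 this
  have helly' : ∀ 𝒢 : Finset (Finset (Set V)), (∀ X ∈ 𝒢, X ∈ S) →
      (∀ X ∈ 𝒢, ∀ Y ∈ 𝒢, (X ∩ Y).Nonempty) → ∃ c ∈ F, ∀ X ∈ 𝒢, c ∈ X := by
    intro 𝒢 h𝒢S hpair
    set W : Set V := {v | Mf v ∈ 𝒢} with hW
    have hWind : IsIndep G W := by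
      intro u hu v hv hadj
      obtain ⟨x, hx⟩ := hpair (Mf u) hu (Mf v) hv
      have hx' := Finset.mem_inter.1 hx
      have hxu := (hMfmem u x).1 hx'.1
      have hxv := (hMfmem v x).1 hx'.2
      exact hxu.1.1 hxu.2 hxv.2 hadj
    obtain ⟨t, ht, hsub⟩ := hext W hWind
    refine ⟨t, ?_, ?_⟩
    · rw [hFdef, Set.Finite.mem_toFinset]
      exact ht
    · intro X hX
      obtain ⟨v, rfl⟩ := hmemS X (h𝒢S X hX)
      exact (hMfmem v t).2 ⟨ht, hsub hX⟩
  have := key_bound k hk F hFcard S h1' h2' h3' helly'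
  omega
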